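/- Let G be a finite group with σ ∈ Aut(G) and inverse-closed S ⊆ G \ {1} such that {S, S^σ, …, S^{σ^{k-1}}} is a partition of G \ {1}. Let H be a nontrivial characteristic subgroup of G. Then, with A := H ∩ S, the restriction of σ to H is an automorphism of H, A is inverse-closed, and {A, A^σ, …, A^{σ^{k-1}}} is a partition of H \ {1}. -/

import Mathlib

/-- If `G` is `k`-rotational via `(σ, S)` and `H` is a nontrivial
characteristic subgroup of `G`, then `σ` restricts to `H`, `A := H ∩ S` is inverse-closed,
and `{A, A^σ, …, A^{σ^{k-1}}}` is a partition of `H \ {1}`. -/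
theorem stmt8 {G : Type*} [Group G] [Fintype G] (k : ℕ)
    (σ : MulAut G) (S : Set G) (hS1 : S ⊆ {g : G | g ≠ 1}) (hSinv : S⁻¹ = S)
    (hpair : Pairwise fun i j : Fin k =>
      Disjoint ((⇑(σ ^ (i : ℕ))) '' S) ((⇑(σ ^ (j : ℕ))) '' S))
    (hunion : (⋃ i : Fin k, (⇑(σ ^ (i : ℕ))) '' S) = {g : G | g ≠ 1})
    (H : Subgroup G) [H.Characteristic] (hH : H ≠ ⊥) :
    (∀ h ∈ H, σ h ∈ H) ∧
    (((H : Set G) ∩ S)⁻¹ = (H : Set G) ∩ S) ∧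
    (Pairwise fun i j : Fin k =>
      Disjoint ((⇑(σ ^ (i : ℕ))) '' ((H : Set G) ∩ S))
        ((⇑(σ ^ (j : ℕ))) '' ((H : Set G) ∩ S))) ∧
    (⋃ i : Fin k, (⇑(σ ^ (i : ℕ))) '' ((H : Set G) ∩ S)) = (H : Set G) \ {1} := by
  have hfix : ∀ (φ : G ≃* G) (x : G), x ∈ H ↔ φ x ∈ H := by
    intro φ x
    have := Subgroup.characteristic_iff_comap_eq.mp ‹H.Characteristic› φ
    constructor
    · intro hx
      rw [← this] at hx
      exact hx
    · intro hx
      rw [← this]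
      exact hx
  refine ⟨fun h hh => (hfix σ h).mp hh, ?_, ?_, ?_⟩
  · ext x
    simp only [Set.mem_inv, Set.mem_inter_iff, SetLike.mem_coe]
    have hSmem : ∀ y : G, y⁻¹ ∈ S ↔ y ∈ S := by
      intro y
      constructor
      · intro hy
        have : (y⁻¹)⁻¹ ∈ S⁻¹ := by simpa using hy
        rwa [hSinv, inv_inv] at this
      · intro hy
        rw [← hSinv]; simpa using hy
    exact and_congr (by simp) (hSmem x)
  · intro i j hij
    exact (hpair hij).mono (Set.image_mono Set.inter_subset_right)
      (Set.image_mono Set.inter_subset_right)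
  · have himg : ∀ n : ℕ, (⇑(σ ^ n)) '' ((H : Set G) ∩ S) = (H : Set G) ∩ (⇑(σ ^ n)) '' S := by
      intro n
      ext x
      constructor
      · rintro ⟨y, ⟨hyH, hyS⟩, rfl⟩
        exact ⟨(hfix ((σ : G ≃* G) ^ n) y).mp hyH, ⟨y, hyS, rfl⟩⟩
      · rintro ⟨hxH, y, hyS, rfl⟩
        refine ⟨y, ⟨?_, hyS⟩, rfl⟩
        exact (hfix ((σ : G ≃* G) ^ n) y).mpr hxH
    ext x
    simp only [Set.mem_iUnion, himg, Set.mem_inter_iff, Set.mem_diff, SetLike.mem_coe,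
      Set.mem_singleton_iff]
    constructor
    · rintro ⟨i, hxH, hxS⟩
      refine ⟨hxH, ?_⟩
      have : x ∈ (⋃ i : Fin k, (⇑(σ ^ (i : ℕ))) '' S) := Set.mem_iUnion.mpr ⟨i, hxS⟩
      rw [hunion] at this
      exact this
    · rintro ⟨hxH, hx1⟩
      have : x ∈ (⋃ i : Fin k, (⇑(σ ^ (i : ℕ))) '' S) := by rw [hunion]; exact hx1
      obtain ⟨i, hxi⟩ := Set.mem_iUnion.mp this
      exact ⟨i, hxH, hxi⟩
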